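/- Let r₁, r₂ ∈ ℝ with r₁ < -1 < r₂ < 0, let A, B be nonzero real polynomials, and let F : ℤ → ℝ satisfy F(j)/|r₂|^j → 0 as j → -∞ and F(j)/|r₁|^j → 0 as j → +∞. Then the two-sided sequence x_j = A(j) r₁^j + F(j) + B(j) r₂^j cannot simultaneously have (-1)^j(x_{j+1}-x_j) of constant sign over ℤ and x_{2j+2}-x_{2j} of constant sign over j ∈ ℤ. -/

import Mathlib

/-- A two-sided real sequence has constant sign if it is everywhere nonnegative
or everywhere nonpositive. -/
def ConstSign (u : ℤ → ℝ) : Prop := (∀ j, 0 ≤ u j) ∨ (∀ j, u j ≤ 0)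

open Filter Polynomial

section Aux

lemma my_tendsto_zero_of_abs_le {α : Type*} {l : Filter α} {f g : α → ℝ}
    (hg : Tendsto g l (nhds 0)) (h : ∀ j, |f j| ≤ g j) :
    Tendsto f l (nhds 0) := by
  have h1 : Tendsto (fun j => -(g j)) l (nhds 0) := by simpa using hg.neg
  exact tendsto_of_tendsto_of_tendsto_of_le_of_le h1 hg
    (fun j => (abs_le.1 (h j)).1) (fun j => (abs_le.1 (h j)).2)

lemma my_abs_neg_one_zpow (j : ℤ) : |(-1:ℝ) ^ j| = 1 := by
  have hy : (-1:ℝ) ^ j * (-1) ^ j = 1 := by rw [← mul_zpow]; norm_num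
  rcases mul_self_eq_one_iff.1 hy with h | h <;> rw [h] <;> norm_num

lemma poly_mul_exp_zero (Q : Polynomial ℝ) {c : ℝ} (hc : 0 < c) :
    Tendsto (fun x : ℝ => Q.eval x * Real.exp (-(c * x))) atTop (nhds 0) := by
  have h1 := (Q.comp (Polynomial.C c⁻¹ * Polynomial.X)).tendsto_div_exp_atTop
  have h2 : Tendsto (fun x : ℝ => c * x) atTop atTop := tendsto_id.const_mul_atTop hc
  refine (h1.comp h2).congr fun x => ?_
  simp [Function.comp, Polynomial.eval_comp, Real.exp_neg, div_eq_mul_inv,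
    inv_mul_cancel_left₀ hc.ne']

lemma poly_geom_top (Q : Polynomial ℝ) {q : ℝ} (h0 : 0 < q) (h1 : q < 1) :
    Tendsto (fun j : ℤ => Q.eval (j : ℝ) * q ^ j) atTop (nhds 0) := by
  have hlog : Real.log q < 0 := Real.log_neg h0 h1
  have hc : 0 < -Real.log q := by linarith
  have h2 := (poly_mul_exp_zero Q hc).comp (tendsto_intCast_atTop_atTop (R := ℝ))
  refine h2.congr fun j => ?_
  have hq : q ^ (j : ℤ) = Real.exp (Real.log q * (j : ℝ)) := by
    rw [← Real.rpow_intCast q j, Real.rpow_def_of_pos h0]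
  simp only [Function.comp_apply, hq, neg_mul, neg_neg]

lemma poly_eventually (P : Polynomial ℝ) (hP : 0 < P.leadingCoeff) :
    ∃ c > (0:ℝ), ∀ᶠ x : ℝ in atTop, c ≤ P.eval x := by
  rcases le_or_gt P.degree 0 with h | h
  · refine ⟨P.leadingCoeff, hP, Eventually.of_forall fun x => ?_⟩
    have hnd : P.natDegree = 0 := Nat.le_zero.1 (Polynomial.natDegree_le_iff_degree_le.2 h)
    have hPC := Polynomial.eq_C_of_degree_le_zero h
    have heval : P.eval x = P.coeff 0 := by
      conv_lhs => rw [hPC]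
      simp
    rw [heval, Polynomial.leadingCoeff, hnd]
  · exact ⟨1, one_pos,
      (P.tendsto_atTop_of_leadingCoeff_nonneg h hP.le).eventually_ge_atTop 1⟩

lemma key_top {ρ σ : ℝ} (hσ : 0 < σ) (hσρ : σ < ρ) (P Q : Polynomial ℝ)
    (hP : 0 < P.leadingCoeff) (E : ℤ → ℝ)
    (hE : Tendsto (fun j : ℤ => E j / ρ ^ j) atTop (nhds 0)) :
    ∀ᶠ j : ℤ in atTop,
      0 < P.eval (j : ℝ) * ρ ^ j + E j + Q.eval (j : ℝ) * σ ^ j := by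
  have hρ : 0 < ρ := hσ.trans hσρ
  obtain ⟨c, hc, hev⟩ := poly_eventually P hP
  have hq0 : 0 < σ / ρ := div_pos hσ hρ
  have hq1 : σ / ρ < 1 := (div_lt_one hρ).2 hσρ
  have hz : Tendsto (fun j : ℤ => E j / ρ ^ j + Q.eval (j : ℝ) * (σ / ρ) ^ j)
      atTop (nhds 0) := by
    simpa using hE.add (poly_geom_top Q hq0 hq1)
  have hz' : ∀ᶠ j : ℤ in atTop,
      -c < E j / ρ ^ j + Q.eval (j : ℝ) * (σ / ρ) ^ j :=
    hz.eventually (eventually_gt_nhds (by linarith))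
  have hev' : ∀ᶠ j : ℤ in atTop, c ≤ P.eval (j : ℝ) :=
    (tendsto_intCast_atTop_atTop (R := ℝ)).eventually hev
  filter_upwards [hz', hev'] with j h1 h2
  have hρj : 0 < ρ ^ j := zpow_pos hρ j
  have hρjne : ρ ^ j ≠ 0 := ne_of_gt hρj
  have key : P.eval (j : ℝ) * ρ ^ j + E j + Q.eval (j : ℝ) * σ ^ j
      = (P.eval (j : ℝ) + (E j / ρ ^ j + Q.eval (j : ℝ) * (σ / ρ) ^ j)) * ρ ^ j := by
    rw [div_zpow]
    field_simp
    ring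
  rw [key]
  exact mul_pos (by linarith) hρj

lemma key_bot {ρ σ : ℝ} (hσ : 0 < σ) (hσρ : σ < ρ) (P Q : Polynomial ℝ)
    (hQ : 0 < (Q.comp (-Polynomial.X)).leadingCoeff) (E : ℤ → ℝ)
    (hE : Tendsto (fun j : ℤ => E j / σ ^ j) atBot (nhds 0)) :
    ∀ᶠ j : ℤ in atBot,
      0 < P.eval (j : ℝ) * ρ ^ j + E j + Q.eval (j : ℝ) * σ ^ j := by
  have hρ : 0 < ρ := hσ.trans hσρ
  have hσ' : 0 < ρ⁻¹ := inv_pos.2 hρ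
  have hσρ' : ρ⁻¹ < σ⁻¹ := by
    rw [inv_eq_one_div, inv_eq_one_div]
    exact one_div_lt_one_div_of_lt hσ hσρ
  have hE' : Tendsto (fun j : ℤ => E (-j) / (σ⁻¹) ^ j) atTop (nhds 0) := by
    have h := hE.comp (tendsto_neg_atTop_atBot (G := ℤ))
    refine h.congr fun j => ?_
    simp [Function.comp, inv_zpow, zpow_neg]
  have h := key_top hσ' hσρ' (Q.comp (-Polynomial.X)) (P.comp (-Polynomial.X)) hQ _ hE'
  have h2 := (tendsto_neg_atBot_atTop (G := ℤ)).eventually h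
  refine h2.mono fun j hj => ?_
  simp only [Polynomial.eval_comp, Polynomial.eval_neg, Polynomial.eval_X,
    Int.cast_neg, neg_neg, inv_zpow, zpow_neg, inv_inv] at hj
  linarith

lemma no_constSign {ρ σ : ℝ} (hσ : 0 < σ) (hσρ : σ < ρ) (P Q : Polynomial ℝ)
    (E : ℤ → ℝ)
    (hEtop : Tendsto (fun j : ℤ => E j / ρ ^ j) atTop (nhds 0))
    (hEbot : Tendsto (fun j : ℤ => E j / σ ^ j) atBot (nhds 0))
    (u : ℤ → ℝ)
    (hu : ∀ j : ℤ, u j = P.eval (j : ℝ) * ρ ^ j + E j + Q.eval (j : ℝ) * σ ^ j)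
    (hP : 0 < P.leadingCoeff) (hQ : (Q.comp (-Polynomial.X)).leadingCoeff < 0)
    (hcs : ConstSign u) : False := by
  have hpos : ∃ j : ℤ, 0 < u j := by
    obtain ⟨j, hj⟩ := (key_top hσ hσρ P Q hP E hEtop).exists
    exact ⟨j, by rw [hu]; exact hj⟩
  have hneg : ∃ j : ℤ, u j < 0 := by
    have hQ' : 0 < ((-Q).comp (-Polynomial.X)).leadingCoeff := by
      rw [Polynomial.neg_comp, Polynomial.leadingCoeff_neg]
      linarith
    have hE' : Tendsto (fun j : ℤ => (-E j) / σ ^ j) atBot (nhds 0) := by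
      simpa [neg_div] using hEbot.neg
    obtain ⟨j, hj⟩ := (key_bot hσ hσρ (-P) (-Q) hQ' (fun j => -E j) hE').exists
    refine ⟨j, ?_⟩
    simp only [Polynomial.eval_neg, neg_mul] at hj
    rw [hu j]
    linarith
  rcases hcs with h | h
  · obtain ⟨j, hj⟩ := hneg; exact absurd (h j) (not_le.2 hj)
  · obtain ⟨j, hj⟩ := hpos; exact absurd (h j) (not_le.2 hj)

lemma constSign_prod {ρ σ : ℝ} (hσ : 0 < σ) (hσρ : σ < ρ) (P Q : Polynomial ℝ)
    (hP : P ≠ 0) (hQ : Q ≠ 0) (E : ℤ → ℝ)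
    (hEtop : Tendsto (fun j : ℤ => E j / ρ ^ j) atTop (nhds 0))
    (hEbot : Tendsto (fun j : ℤ => E j / σ ^ j) atBot (nhds 0))
    (u : ℤ → ℝ)
    (hu : ∀ j : ℤ, u j = P.eval (j : ℝ) * ρ ^ j + E j + Q.eval (j : ℝ) * σ ^ j)
    (hcs : ConstSign u) :
    0 < P.leadingCoeff * (Q.comp (-Polynomial.X)).leadingCoeff := by
  have hp : P.leadingCoeff ≠ 0 := Polynomial.leadingCoeff_ne_zero.2 hP
  have hq : (Q.comp (-Polynomial.X)).leadingCoeff ≠ 0 := by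
    rw [Polynomial.leadingCoeff_comp (by simp)]
    refine mul_ne_zero (Polynomial.leadingCoeff_ne_zero.2 hQ) ?_
    have : (-Polynomial.X : Polynomial ℝ).leadingCoeff = -1 := by
      rw [Polynomial.leadingCoeff_neg, Polynomial.leadingCoeff_X]
    rw [this]
    exact pow_ne_zero _ (by norm_num)
  rcases hp.lt_or_gt with hp' | hp' <;> rcases hq.lt_or_gt with hq' | hq'
  · exact mul_pos_of_neg_of_neg hp' hq'
  · -- p < 0, q > 0 : contradiction via negated data
    exfalso
    have hP' : 0 < (-P).leadingCoeff := by
      rw [Polynomial.leadingCoeff_neg]; linarith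
    have hQ' : ((-Q).comp (-Polynomial.X)).leadingCoeff < 0 := by
      rw [Polynomial.neg_comp, Polynomial.leadingCoeff_neg]; linarith
    have hEtop' : Tendsto (fun j : ℤ => (-E j) / ρ ^ j) atTop (nhds 0) := by
      simpa [neg_div] using hEtop.neg
    have hEbot' : Tendsto (fun j : ℤ => (-E j) / σ ^ j) atBot (nhds 0) := by
      simpa [neg_div] using hEbot.neg
    have hu' : ∀ j : ℤ, (fun j : ℤ => -(u j)) j
        = (-P).eval (j : ℝ) * ρ ^ j + (-E j) + (-Q).eval (j : ℝ) * σ ^ j := by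
      intro j
      simp only [Polynomial.eval_neg, neg_mul, hu j]
      ring
    have hcs' : ConstSign (fun j : ℤ => -(u j)) := by
      rcases hcs with h | h
      · exact Or.inr fun j => by simpa using h j
      · exact Or.inl fun j => by simpa using h j
    exact no_constSign hσ hσρ (-P) (-Q) (fun j => -E j) hEtop' hEbot'
      (fun j => -(u j)) hu' hP' hQ' hcs'
  · exact absurd (no_constSign hσ hσρ P Q E hEtop hEbot u hu hp' hq' hcs) not_false
  · exact mul_pos hp' hq'

lemma leadingCoeff_eq_of (p : Polynomial ℝ) (k : ℕ) (h1 : p.natDegree ≤ k)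
    (h2 : p.coeff k ≠ 0) : p.leadingCoeff = p.coeff k ∧ p.natDegree = k := by
  have hk : k ≤ p.natDegree := Polynomial.le_natDegree_of_ne_zero h2
  have hnd : p.natDegree = k := le_antisymm h1 hk
  exact ⟨by rw [Polynomial.leadingCoeff, hnd], hnd⟩

lemma lead1 (A : Polynomial ℝ) (hA : A ≠ 0) (r : ℝ) (hr : r ≠ 1) :
    (A.comp (Polynomial.X + Polynomial.C 1) * Polynomial.C r - A).leadingCoeff
      = A.leadingCoeff * (r - 1) ∧
    (A.comp (Polynomial.X + Polynomial.C 1) * Polynomial.C r - A).natDegree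
      = A.natDegree := by
  set k := A.natDegree with hk
  have hnd1 : (Polynomial.X + Polynomial.C (1:ℝ)).natDegree = 1 :=
    Polynomial.natDegree_X_add_C 1
  have hcomp_nd : (A.comp (Polynomial.X + Polynomial.C 1)).natDegree = k := by
    rw [Polynomial.natDegree_comp, hnd1, mul_one]
  have hcomp_lead : (A.comp (Polynomial.X + Polynomial.C 1)).leadingCoeff
      = A.leadingCoeff := by
    rw [Polynomial.leadingCoeff_comp (by rw [hnd1]; norm_num)]
    rw [(Polynomial.monic_X_add_C (1:ℝ)).leadingCoeff, one_pow, mul_one]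
  have hcoeffk : (A.comp (Polynomial.X + Polynomial.C 1)).coeff k
      = A.leadingCoeff := by
    rw [← hcomp_lead, Polynomial.leadingCoeff, hcomp_nd]
  have hcoeff : (A.comp (Polynomial.X + Polynomial.C 1) * Polynomial.C r - A).coeff k
      = A.leadingCoeff * (r - 1) := by
    rw [Polynomial.coeff_sub, Polynomial.coeff_mul_C, hcoeffk]
    have : A.coeff k = A.leadingCoeff := rfl
    rw [this]; ring
  have hne : A.leadingCoeff * (r - 1) ≠ 0 :=
    mul_ne_zero (Polynomial.leadingCoeff_ne_zero.2 hA) (sub_ne_zero.2 hr)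
  have hndle : (A.comp (Polynomial.X + Polynomial.C 1) * Polynomial.C r - A).natDegree
      ≤ k := by
    refine le_trans (Polynomial.natDegree_sub_le _ _) (max_le ?_ le_rfl)
    refine le_trans (Polynomial.natDegree_mul_le) ?_
    rw [Polynomial.natDegree_C, add_zero, hcomp_nd]
  obtain ⟨h1, h2⟩ := leadingCoeff_eq_of _ k hndle (by rw [hcoeff]; exact hne)
  exact ⟨by rw [h1, hcoeff], h2⟩

lemma lead2 (A : Polynomial ℝ) (hA : A ≠ 0) (s : ℝ) (hs : s ≠ 1) :
    (A.comp (Polynomial.C 2 * Polynomial.X + Polynomial.C 2) * Polynomial.C s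
        - A.comp (Polynomial.C 2 * Polynomial.X)).leadingCoeff
      = A.leadingCoeff * 2 ^ A.natDegree * (s - 1) ∧
    (A.comp (Polynomial.C 2 * Polynomial.X + Polynomial.C 2) * Polynomial.C s
        - A.comp (Polynomial.C 2 * Polynomial.X)).natDegree = A.natDegree := by
  set k := A.natDegree with hk
  have h2ne : (2:ℝ) ≠ 0 := two_ne_zero
  have hnd1 : (Polynomial.C 2 * Polynomial.X + Polynomial.C (2:ℝ)).natDegree = 1 :=
    Polynomial.natDegree_linear h2ne
  have hl1 : (Polynomial.C 2 * Polynomial.X + Polynomial.C (2:ℝ)).leadingCoeff = 2 :=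
    Polynomial.leadingCoeff_linear h2ne
  have hnd2 : (Polynomial.C 2 * Polynomial.X : Polynomial ℝ).natDegree = 1 :=
    Polynomial.natDegree_C_mul_X 2 h2ne
  have hl2 : (Polynomial.C 2 * Polynomial.X : Polynomial ℝ).leadingCoeff = 2 := by
    rw [Polynomial.leadingCoeff_mul, Polynomial.leadingCoeff_C,
      Polynomial.leadingCoeff_X, mul_one]
  have hcomp_nd : (A.comp (Polynomial.C 2 * Polynomial.X + Polynomial.C 2)).natDegree
      = k := by rw [Polynomial.natDegree_comp, hnd1, mul_one]
  have hcomp_nd' : (A.comp (Polynomial.C 2 * Polynomial.X)).natDegree = k := by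
    rw [Polynomial.natDegree_comp, hnd2, mul_one]
  have hcomp_lead : (A.comp (Polynomial.C 2 * Polynomial.X + Polynomial.C 2)).leadingCoeff
      = A.leadingCoeff * 2 ^ k := by
    rw [Polynomial.leadingCoeff_comp (by rw [hnd1]; norm_num), hl1]
  have hcomp_lead' : (A.comp (Polynomial.C 2 * Polynomial.X)).leadingCoeff
      = A.leadingCoeff * 2 ^ k := by
    rw [Polynomial.leadingCoeff_comp (by rw [hnd2]; norm_num), hl2]
  have hcoeffk : (A.comp (Polynomial.C 2 * Polynomial.X + Polynomial.C 2)).coeff k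
      = A.leadingCoeff * 2 ^ k := by
    rw [← hcomp_lead, Polynomial.leadingCoeff, hcomp_nd]
  have hcoeffk' : (A.comp (Polynomial.C 2 * Polynomial.X)).coeff k
      = A.leadingCoeff * 2 ^ k := by
    rw [← hcomp_lead', Polynomial.leadingCoeff, hcomp_nd']
  have hcoeff : (A.comp (Polynomial.C 2 * Polynomial.X + Polynomial.C 2) * Polynomial.C s
      - A.comp (Polynomial.C 2 * Polynomial.X)).coeff k
      = A.leadingCoeff * 2 ^ k * (s - 1) := by
    rw [Polynomial.coeff_sub, Polynomial.coeff_mul_C, hcoeffk, hcoeffk']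
    ring
  have hne : A.leadingCoeff * 2 ^ k * (s - 1) ≠ 0 :=
    mul_ne_zero (mul_ne_zero (Polynomial.leadingCoeff_ne_zero.2 hA)
      (pow_ne_zero _ h2ne)) (sub_ne_zero.2 hs)
  have hndle : (A.comp (Polynomial.C 2 * Polynomial.X + Polynomial.C 2) * Polynomial.C s
      - A.comp (Polynomial.C 2 * Polynomial.X)).natDegree ≤ k := by
    refine le_trans (Polynomial.natDegree_sub_le _ _) (max_le ?_ hcomp_nd'.le)
    refine le_trans (Polynomial.natDegree_mul_le) ?_
    rw [Polynomial.natDegree_C, add_zero, hcomp_nd]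
  obtain ⟨h1, h2⟩ := leadingCoeff_eq_of _ k hndle (by rw [hcoeff]; exact hne)
  exact ⟨by rw [h1, hcoeff], h2⟩

lemma lead_comp_neg (P : Polynomial ℝ) :
    (P.comp (-Polynomial.X)).leadingCoeff
      = P.leadingCoeff * (-1) ^ P.natDegree := by
  rw [Polynomial.leadingCoeff_comp (by simp)]
  congr 1
  rw [Polynomial.leadingCoeff_neg, Polynomial.leadingCoeff_X]

end Aux

set_option maxHeartbeats 1000000 in
open Filter Polynomial in
/-- For `x_j = A(j) r₁^j + F(j) + B(j) r₂^j` with `r₁ < -1 < r₂ < 0` and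
`A, B` nonzero, the sequences `(-1)^j (x_{j+1} - x_j)` and `x_{2j+2} - x_{2j}`
cannot both have constant sign over `ℤ`. -/
theorem stmt10 (r₁ r₂ : ℝ) (hr₁ : r₁ < -1) (hr₂ : -1 < r₂) (hr₂0 : r₂ < 0)
    (A B : Polynomial ℝ) (hA : A ≠ 0) (hB : B ≠ 0)
    (F : ℤ → ℝ)
    (hFbot : Tendsto (fun j : ℤ => F j / |r₂| ^ j) atBot (nhds 0))
    (hFtop : Tendsto (fun j : ℤ => F j / |r₁| ^ j) atTop (nhds 0))
    (x : ℤ → ℝ)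
    (hx : ∀ j : ℤ, x j = A.eval (j : ℝ) * r₁ ^ j + F j + B.eval (j : ℝ) * r₂ ^ j) :
    ¬ (ConstSign (fun j : ℤ => (-1 : ℝ) ^ j * (x (j + 1) - x j)) ∧
        ConstSign (fun j : ℤ => x (2 * j + 2) - x (2 * j))) := by
  rintro ⟨hcs1, hcs2⟩
  have hr₁0 : r₁ < 0 := by linarith
  have hr₁ne : r₁ ≠ 0 := ne_of_lt hr₁0
  have hr₂ne : r₂ ≠ 0 := ne_of_lt hr₂0
  have habs1 : |r₁| = -r₁ := abs_of_neg hr₁0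
  have habs2 : |r₂| = -r₂ := abs_of_neg hr₂0
  have habs1ne : |r₁| ≠ 0 := abs_ne_zero.2 hr₁ne
  have habs2ne : |r₂| ≠ 0 := abs_ne_zero.2 hr₂ne
  have h1lt : 1 < |r₁| := by rw [habs1]; linarith
  have h2lt : |r₂| < 1 := by rw [habs2]; linarith
  have h2pos : 0 < |r₂| := abs_pos.2 hr₂ne
  have h12 : |r₂| < |r₁| := h2lt.trans h1lt
  have hsq1 : (1:ℝ) < r₁ ^ 2 := by nlinarith
  have hsq2 : r₂ ^ 2 < 1 := by nlinarith
  have hsq2pos : 0 < r₂ ^ 2 := by positivity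
  have hsq12 : r₂ ^ 2 < r₁ ^ 2 := hsq2.trans hsq1
  -- the four polynomials
  set P₁ := A.comp (Polynomial.X + Polynomial.C 1) * Polynomial.C r₁ - A with hP₁def
  set Q₁ := B.comp (Polynomial.X + Polynomial.C 1) * Polynomial.C r₂ - B with hQ₁def
  set P₂ := A.comp (Polynomial.C 2 * Polynomial.X + Polynomial.C 2) * Polynomial.C (r₁ ^ 2)
      - A.comp (Polynomial.C 2 * Polynomial.X) with hP₂def
  set Q₂ := B.comp (Polynomial.C 2 * Polynomial.X + Polynomial.C 2) * Polynomial.C (r₂ ^ 2)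
      - B.comp (Polynomial.C 2 * Polynomial.X) with hQ₂def
  obtain ⟨hlP₁, hdP₁⟩ := lead1 A hA r₁ (by linarith)
  obtain ⟨hlQ₁, hdQ₁⟩ := lead1 B hB r₂ (by linarith)
  obtain ⟨hlP₂, hdP₂⟩ := lead2 A hA (r₁ ^ 2) (by linarith)
  obtain ⟨hlQ₂, hdQ₂⟩ := lead2 B hB (r₂ ^ 2) (by linarith)
  have ha : A.leadingCoeff ≠ 0 := Polynomial.leadingCoeff_ne_zero.2 hA
  have hb : B.leadingCoeff ≠ 0 := Polynomial.leadingCoeff_ne_zero.2 hB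
  have hP₁ne : P₁ ≠ 0 := by
    rw [← Polynomial.leadingCoeff_ne_zero, hP₁def, hlP₁]
    exact mul_ne_zero ha (by intro h; apply hr₁ne.elim; nlinarith [sub_eq_zero.1 h])
  have hQ₁ne : Q₁ ≠ 0 := by
    rw [← Polynomial.leadingCoeff_ne_zero, hQ₁def, hlQ₁]
    exact mul_ne_zero hb (sub_ne_zero.2 (by linarith))
  have hP₂ne : P₂ ≠ 0 := by
    rw [← Polynomial.leadingCoeff_ne_zero, hP₂def, hlP₂]
    exact mul_ne_zero (mul_ne_zero ha (pow_ne_zero _ two_ne_zero))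
      (sub_ne_zero.2 (by linarith))
  have hQ₂ne : Q₂ ≠ 0 := by
    rw [← Polynomial.leadingCoeff_ne_zero, hQ₂def, hlQ₂]
    exact mul_ne_zero (mul_ne_zero hb (pow_ne_zero _ two_ne_zero))
      (sub_ne_zero.2 (by linarith))
  -- tendsto plumbing
  have t1 : Tendsto (fun j : ℤ => j + 1) atTop atTop :=
    tendsto_atTop_add_const_right _ 1 tendsto_id
  have t1b : Tendsto (fun j : ℤ => j + 1) atBot atBot :=
    tendsto_atBot_add_const_right _ 1 tendsto_id
  have t2 : Tendsto (fun j : ℤ => 2 * j) atTop atTop := by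
    refine tendsto_atTop_atTop.mpr fun b => ⟨max b 0, fun a ha' => ?_⟩
    have h1 : b ≤ a := le_trans (le_max_left _ _) ha'
    have h2 : 0 ≤ a := le_trans (le_max_right _ _) ha'
    omega
  have t2b : Tendsto (fun j : ℤ => 2 * j) atBot atBot := by
    refine tendsto_atBot_atBot.mpr fun b => ⟨min b 0, fun a ha' => ?_⟩
    have h1 : a ≤ b := le_trans ha' (min_le_left _ _)
    have h2 : a ≤ 0 := le_trans ha' (min_le_right _ _)
    omega
  have t3 : Tendsto (fun j : ℤ => 2 * j + 2) atTop atTop :=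
    tendsto_atTop_add_const_right _ 2 t2
  have t3b : Tendsto (fun j : ℤ => 2 * j + 2) atBot atBot :=
    tendsto_atBot_add_const_right _ 2 t2b
  -- error terms
  have g1top : Tendsto (fun j : ℤ => F (j + 1) / |r₁| ^ j) atTop (nhds 0) := by
    have h := (hFtop.comp t1).mul_const |r₁|
    rw [zero_mul] at h
    refine h.congr fun j => ?_
    simp only [Function.comp_apply]
    rw [zpow_add_one₀ habs1ne, ← div_div, div_mul_cancel₀ _ habs1ne]
  have g1bot : Tendsto (fun j : ℤ => F (j + 1) / |r₂| ^ j) atBot (nhds 0) := by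
    have h := (hFbot.comp t1b).mul_const |r₂|
    rw [zero_mul] at h
    refine h.congr fun j => ?_
    simp only [Function.comp_apply]
    rw [zpow_add_one₀ habs2ne, ← div_div, div_mul_cancel₀ _ habs2ne]
  have hE1top : Tendsto (fun j : ℤ => ((-1:ℝ) ^ j * (F (j + 1) - F j)) / |r₁| ^ j)
      atTop (nhds 0) := by
    refine my_tendsto_zero_of_abs_le (g := fun j => |F (j + 1) / |r₁| ^ j| + |F j / |r₁| ^ j|)
      (by simpa using g1top.abs.add hFtop.abs) fun j => ?_
    have habs : |(-1:ℝ) ^ (j:ℤ)| = 1 := my_abs_neg_one_zpow j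
    calc |((-1:ℝ) ^ j * (F (j + 1) - F j)) / |r₁| ^ j|
        = |(-1:ℝ) ^ j| * |(F (j + 1) - F j) / |r₁| ^ j| := by
          rw [mul_div_assoc, abs_mul]
      _ = |F (j + 1) / |r₁| ^ j - F j / |r₁| ^ j| := by
          rw [habs, one_mul, sub_div]
      _ ≤ |F (j + 1) / |r₁| ^ j| + |F j / |r₁| ^ j| := abs_sub _ _
  have hE1bot : Tendsto (fun j : ℤ => ((-1:ℝ) ^ j * (F (j + 1) - F j)) / |r₂| ^ j)
      atBot (nhds 0) := by
    refine my_tendsto_zero_of_abs_le (g := fun j => |F (j + 1) / |r₂| ^ j| + |F j / |r₂| ^ j|)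
      (by simpa using g1bot.abs.add hFbot.abs) fun j => ?_
    have habs : |(-1:ℝ) ^ (j:ℤ)| = 1 := my_abs_neg_one_zpow j
    calc |((-1:ℝ) ^ j * (F (j + 1) - F j)) / |r₂| ^ j|
        = |(-1:ℝ) ^ j| * |(F (j + 1) - F j) / |r₂| ^ j| := by
          rw [mul_div_assoc, abs_mul]
      _ = |F (j + 1) / |r₂| ^ j - F j / |r₂| ^ j| := by
          rw [habs, one_mul, sub_div]
      _ ≤ |F (j + 1) / |r₂| ^ j| + |F j / |r₂| ^ j| := abs_sub _ _
  -- squared-base identities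
  have base1 : ∀ j : ℤ, (r₁ ^ 2 : ℝ) ^ j = |r₁| ^ (2 * j) := by
    intro j
    have e : (r₁ ^ 2 : ℝ) = |r₁| ^ (2:ℤ) := by
      rw [show ((2:ℤ)) = ((2:ℕ):ℤ) by norm_num, zpow_natCast, sq_abs]
    rw [e, ← zpow_mul]
  have base2 : ∀ j : ℤ, (r₂ ^ 2 : ℝ) ^ j = |r₂| ^ (2 * j) := by
    intro j
    have e : (r₂ ^ 2 : ℝ) = |r₂| ^ (2:ℤ) := by
      rw [show ((2:ℤ)) = ((2:ℕ):ℤ) by norm_num, zpow_natCast, sq_abs]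
    rw [e, ← zpow_mul]
  have g2top : Tendsto (fun j : ℤ => F (2 * j) / (r₁ ^ 2) ^ j) atTop (nhds 0) := by
    refine (hFtop.comp t2).congr fun j => ?_
    simp only [Function.comp_apply, base1]
  have g2bot : Tendsto (fun j : ℤ => F (2 * j) / (r₂ ^ 2) ^ j) atBot (nhds 0) := by
    refine (hFbot.comp t2b).congr fun j => ?_
    simp only [Function.comp_apply, base2]
  have g3top : Tendsto (fun j : ℤ => F (2 * j + 2) / (r₁ ^ 2) ^ j) atTop (nhds 0) := by
    have h := (hFtop.comp t3).mul_const (|r₁| ^ (2:ℤ))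
    rw [zero_mul] at h
    refine h.congr fun j => ?_
    simp only [Function.comp_apply, base1]
    rw [zpow_add₀ habs1ne (2*j) 2, ← div_div,
      div_mul_cancel₀ _ (zpow_ne_zero _ habs1ne)]
  have g3bot : Tendsto (fun j : ℤ => F (2 * j + 2) / (r₂ ^ 2) ^ j) atBot (nhds 0) := by
    have h := (hFbot.comp t3b).mul_const (|r₂| ^ (2:ℤ))
    rw [zero_mul] at h
    refine h.congr fun j => ?_
    simp only [Function.comp_apply, base2]
    rw [zpow_add₀ habs2ne (2*j) 2, ← div_div,
      div_mul_cancel₀ _ (zpow_ne_zero _ habs2ne)]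
  have hE2top : Tendsto (fun j : ℤ => (F (2 * j + 2) - F (2 * j)) / (r₁ ^ 2) ^ j)
      atTop (nhds 0) := by
    refine my_tendsto_zero_of_abs_le
      (g := fun j => |F (2 * j + 2) / (r₁ ^ 2) ^ j| + |F (2 * j) / (r₁ ^ 2) ^ j|)
      (by simpa using g3top.abs.add g2top.abs) fun j => ?_
    rw [sub_div]
    exact abs_sub _ _
  have hE2bot : Tendsto (fun j : ℤ => (F (2 * j + 2) - F (2 * j)) / (r₂ ^ 2) ^ j)
      atBot (nhds 0) := by
    refine my_tendsto_zero_of_abs_le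
      (g := fun j => |F (2 * j + 2) / (r₂ ^ 2) ^ j| + |F (2 * j) / (r₂ ^ 2) ^ j|)
      (by simpa using g3bot.abs.add g2bot.abs) fun j => ?_
    rw [sub_div]
    exact abs_sub _ _
  -- pointwise identities
  have hu1 : ∀ j : ℤ, (fun j : ℤ => (-1 : ℝ) ^ j * (x (j + 1) - x j)) j
      = P₁.eval (j : ℝ) * |r₁| ^ j + ((-1:ℝ) ^ j * (F (j + 1) - F j))
        + Q₁.eval (j : ℝ) * |r₂| ^ j := by
    intro j
    have e1 : ((-1:ℝ)) ^ j * r₁ ^ j = |r₁| ^ j := by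
      rw [← mul_zpow, neg_one_mul, ← habs1]
    have e2 : ((-1:ℝ)) ^ j * r₂ ^ j = |r₂| ^ j := by
      rw [← mul_zpow, neg_one_mul, ← habs2]
    have f1 : r₁ ^ (j + 1) = r₁ ^ j * r₁ := zpow_add_one₀ hr₁ne j
    have f2 : r₂ ^ (j + 1) = r₂ ^ j * r₂ := zpow_add_one₀ hr₂ne j
    simp only [hx (j + 1), hx j, hP₁def, hQ₁def, Polynomial.eval_sub,
      Polynomial.eval_mul, Polynomial.eval_comp, Polynomial.eval_add,
      Polynomial.eval_X, Polynomial.eval_C]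
    push_cast
    rw [f1, f2, ← e1, ← e2]
    ring
  have hu2 : ∀ j : ℤ, (fun j : ℤ => x (2 * j + 2) - x (2 * j)) j
      = P₂.eval (j : ℝ) * (r₁ ^ 2) ^ j + (F (2 * j + 2) - F (2 * j))
        + Q₂.eval (j : ℝ) * (r₂ ^ 2) ^ j := by
    intro j
    have f2 : r₁ ^ (2 * j) = (r₁ ^ 2) ^ j := by
      rw [zpow_mul, show ((2:ℤ)) = ((2:ℕ):ℤ) by norm_num, zpow_natCast]
    have f4 : r₂ ^ (2 * j) = (r₂ ^ 2) ^ j := by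
      rw [zpow_mul, show ((2:ℤ)) = ((2:ℕ):ℤ) by norm_num, zpow_natCast]
    have f1 : r₁ ^ (2 * j + 2) = (r₁ ^ 2) ^ j * r₁ ^ 2 := by
      rw [zpow_add₀ hr₁ne (2*j) 2, f2, show ((2:ℤ)) = ((2:ℕ):ℤ) by norm_num, zpow_natCast]
    have f3 : r₂ ^ (2 * j + 2) = (r₂ ^ 2) ^ j * r₂ ^ 2 := by
      rw [zpow_add₀ hr₂ne (2*j) 2, f4, show ((2:ℤ)) = ((2:ℕ):ℤ) by norm_num, zpow_natCast]
    simp only [hx (2 * j + 2), hx (2 * j), hP₂def, hQ₂def, Polynomial.eval_sub,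
      Polynomial.eval_mul, Polynomial.eval_comp, Polynomial.eval_add,
      Polynomial.eval_X, Polynomial.eval_C]
    push_cast
    rw [f1, f2, f3, f4]
    ring
  -- the two sign conditions
  have key1 := constSign_prod h2pos h12 P₁ Q₁ hP₁ne hQ₁ne _ hE1top hE1bot _ hu1 hcs1
  have key2 := constSign_prod hsq2pos hsq12 P₂ Q₂ hP₂ne hQ₂ne _ hE2top hE2bot _ hu2 hcs2
  rw [hP₁def, hQ₁def] at key1
  rw [hP₂def, hQ₂def] at key2
  rw [lead_comp_neg, hlP₁, hlQ₁, hdQ₁] at key1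
  rw [lead_comp_neg, hlP₂, hlQ₂, hdQ₂] at key2
  -- final arithmetic contradiction
  set a := A.leadingCoeff
  set b := B.leadingCoeff
  set k := A.natDegree
  set m := B.natDegree
  set s : ℝ := (-1 : ℝ) ^ m with hs
  have hab1 : 0 < a * b * s := by
    have hfac : 0 < (r₁ - 1) * (r₂ - 1) :=
      mul_pos_of_neg_of_neg (by linarith) (by linarith)
    nlinarith [key1, hfac]
  have hab2 : a * b * s < 0 := by
    have hf2 : 0 < (2:ℝ) ^ k * 2 ^ m * ((r₁ ^ 2 - 1) * (1 - r₂ ^ 2)) :=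
      mul_pos (mul_pos (pow_pos two_pos k) (pow_pos two_pos m))
        (mul_pos (by linarith) (by linarith))
    nlinarith [key2, hf2]
  linarith
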